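/- Let (X, μ) be a probability space and T : X → X an invertible measure-preserving transformation (with measurable measure-preserving inverse). Suppose f ∈ L¹(μ) satisfies ∫_X f dμ = 0 and there is a constant C ≥ 0 such that ∫_X e^{S_N f} dμ ≤ C for all N ≥ 1, where S_N f := ∑_{i=0}^{N−1} f∘Tⁱ. Then there exists a constant C′ depending only on C such that for all L ≥ 0, μ({x ∈ X : f(x) ≤ −L}) ≤ C′ · e^{−L/6}. -/

import Mathlib

open MeasureTheory Filter Function
open scoped Classical ENNReal


lemma markov_exp {X : Type} [MeasurableSpace X] (μ : Measure X) (C : ℝ) (h : X → ℝ)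
    (hm : Measurable h)
    (hint : (∫⁻ x, ENNReal.ofReal (Real.exp (h x)) ∂μ) ≤ ENNReal.ofReal C) (t : ℝ) :
    μ {x | t ≤ h x} ≤ ENNReal.ofReal (C * Real.exp (-t)) := by
  have hmeas : AEMeasurable (fun x => ENNReal.ofReal (Real.exp (h x))) μ :=
    (ENNReal.measurable_ofReal.comp (Real.measurable_exp.comp hm)).aemeasurable
  have key := mul_meas_ge_le_lintegral₀ hmeas (ENNReal.ofReal (Real.exp t))
  have hset : {x | ENNReal.ofReal (Real.exp t) ≤ ENNReal.ofReal (Real.exp (h x))}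
      = {x | t ≤ h x} := by
    ext x
    simp only [Set.mem_setOf_eq, ENNReal.ofReal_le_ofReal_iff (Real.exp_nonneg _),
      Real.exp_le_exp]
  rw [hset] at key
  have key2 : ENNReal.ofReal (Real.exp t) * μ {x | t ≤ h x} ≤ ENNReal.ofReal C :=
    le_trans key hint
  calc μ {x | t ≤ h x}
      = ENNReal.ofReal (Real.exp (-t)) * (ENNReal.ofReal (Real.exp t) * μ {x | t ≤ h x}) := by
        rw [← mul_assoc, ← ENNReal.ofReal_mul (Real.exp_nonneg _), ← Real.exp_add]
        simp
    _ ≤ ENNReal.ofReal (Real.exp (-t)) * ENNReal.ofReal C := mul_le_mul_right key2 _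
    _ = ENNReal.ofReal (C * Real.exp (-t)) := by
        rw [← ENNReal.ofReal_mul (Real.exp_nonneg _), mul_comm]

lemma geom_aux {δ : ℝ} (hδ0 : 0 < δ) (hδ1 : δ ≤ 1) (n : ℕ) :
    ∑ b ∈ Finset.range n, (Real.exp (-δ))^b ≤ 2/δ := by
  set r := Real.exp (-δ) with hr
  have hr0 : 0 ≤ r := (Real.exp_pos _).le
  have hexp : 1 + δ ≤ Real.exp δ := by linarith [Real.add_one_le_exp δ]
  have hrinv : r * Real.exp δ = 1 := by rw [hr, ← Real.exp_add]; simp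
  have hgap : δ/2 ≤ 1 - r := by
    have h3 : r * (1+δ) ≤ 1 := by
      calc r * (1+δ) ≤ r * Real.exp δ := by nlinarith
        _ = 1 := hrinv
    nlinarith
  have hS0 : 0 ≤ ∑ b ∈ Finset.range n, r^b := Finset.sum_nonneg fun b _ => pow_nonneg hr0 b
  have hgs : (∑ b ∈ Finset.range n, r^b) * (1 - r) = 1 - r^n := by
    linear_combination -geom_sum_mul r n
  have hrn : 0 ≤ r^n := pow_nonneg hr0 n
  rw [le_div_iff₀ hδ0]
  nlinarith [mul_le_mul_of_nonneg_left hgap hS0]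



lemma visit_bound
    {X : Type} (T T' : X → X) (hTT' : Function.LeftInverse T' T)
    (g : X → ℝ) (L δ : ℝ) (hL : 0 ≤ L) (hδ : 0 ≤ δ) (M : ℕ)
    (A' : Set X)
    (hA : ∀ x ∈ A', g x ≤ -L)
    (hF : ∀ x ∈ A', ∀ b : ℕ, 1 ≤ b → b ≤ M →
      ∑ i ∈ Finset.range b, g (T^[i] (T x)) ≤ L/2 + b*δ)
    (hB : ∀ x ∈ A', ∀ a : ℕ, 1 ≤ a → a ≤ M →
      ∑ i ∈ Finset.range a, g (T^[i] (T'^[a] x)) ≤ L/2 + a*δ) :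
    ∀ m : ℕ, m ≤ M+1 → ∀ y : X,
      1 ≤ ((Finset.range m).filter (fun a => T^[a] y ∈ A')).card →
      ∑ i ∈ Finset.range m, g (T^[i] y) ≤
        L/2 + m*δ - (L/2) * ((Finset.range m).filter (fun a => T^[a] y ∈ A')).card := by
  intro m
  induction m using Nat.strong_induction_on with
  | _ m IH =>
    intro hmM y hk
    classical
    set s := (Finset.range m).filter (fun a => T^[a] y ∈ A') with hs
    have hsne : s.Nonempty := Finset.card_pos.1 hk
    set a' := s.max' hsne with ha'
    have ha's : a' ∈ s := s.max'_mem hsne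
    have ha'm : a' < m := Finset.mem_range.1 (Finset.mem_filter.1 ha's).1
    have hx' : T^[a'] y ∈ A' := (Finset.mem_filter.1 ha's).2
    set x' := T^[a'] y with hx'def
    -- decompose m = a' + (b+1)
    obtain ⟨b, hb⟩ : ∃ b, m = a' + (b+1) := ⟨m - a' - 1, by omega⟩
    have hbM : b ≤ M := by omega
    have ha'M : a' ≤ M := by omega
    -- split the sum
    have hsplit : ∑ i ∈ Finset.range m, g (T^[i] y)
        = (∑ i ∈ Finset.range a', g (T^[i] y))
          + ∑ i ∈ Finset.range (b+1), g (T^[a' + i] y) := by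
      rw [hb, Finset.sum_range_add]
    -- second block
    have hsecond : ∑ i ∈ Finset.range (b+1), g (T^[a' + i] y)
        = g x' + ∑ i ∈ Finset.range b, g (T^[i] (T x')) := by
      have h0 : ∀ i : ℕ, T^[a' + i] y = T^[i] x' := by
        intro i; rw [add_comm, Function.iterate_add_apply]
      rw [Finset.sum_congr rfl (fun i _ => by rw [h0 i]), Finset.sum_range_succ']
      simp only [Function.iterate_succ_apply, Function.iterate_zero_apply]
      ring
    have hsecond_le : ∑ i ∈ Finset.range (b+1), g (T^[a' + i] y)
        ≤ -L + (L/2 + b*δ) := by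
      rw [hsecond]
      have h1 : g x' ≤ -L := hA x' hx'
      rcases Nat.eq_zero_or_pos b with hb0 | hb1
      · subst hb0; simp only [Finset.range_zero, Finset.sum_empty, Nat.cast_zero]
        nlinarith
      · have := hF x' hx' b hb1 hbM
        linarith
    -- first block
    set s' := (Finset.range a').filter (fun a => T^[a] y ∈ A') with hs'
    have hss' : s = insert a' s' := by
      ext a
      simp only [hs, hs', Finset.mem_insert, Finset.mem_filter, Finset.mem_range]
      constructor
      · rintro ⟨ham, haA⟩
        rcases eq_or_ne a a' with h | h
        · exact Or.inl h
        · have : a ≤ a' := s.le_max' a (by simp [hs, Finset.mem_filter, ham, haA])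
          exact Or.inr ⟨lt_of_le_of_ne this h, haA⟩
      · rintro (h | ⟨h1, h2⟩)
        · subst h; exact ⟨ha'm, hx'⟩
        · exact ⟨h1.trans ha'm, h2⟩
    have ha'ns' : a' ∉ s' := by simp [hs', Finset.mem_filter]
    have hcard : s.card = s'.card + 1 := by rw [hss', Finset.card_insert_of_notMem ha'ns']
    have hfirst : ∑ i ∈ Finset.range a', g (T^[i] y)
        ≤ L/2 + a'*δ - (L/2) * s'.card := by
      rcases Nat.eq_zero_or_pos s'.card with h0 | h1
      · -- use backward control from x'
        rw [h0]
        simp only [Nat.cast_zero, mul_zero, sub_zero]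
        have hy : T'^[a'] x' = y := hTT'.iterate a' y
        rcases Nat.eq_zero_or_pos a' with ha0 | ha1
        · rw [ha0]; simp; positivity
        · have := hB x' hx' a' ha1 ha'M
          rw [hy] at this
          exact this
      · exact IH a' ha'm (by omega) y h1
    have hδm : (a' : ℝ) + b ≤ (m : ℝ) := by
      have : (a' + b : ℕ) ≤ m := by omega
      exact_mod_cast this
    calc ∑ i ∈ Finset.range m, g (T^[i] y)
        ≤ (L/2 + a'*δ - (L/2) * s'.card) + (-L + (L/2 + b*δ)) := by
          rw [hsplit]; exact add_le_add hfirst hsecond_le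
      _ ≤ L/2 + m*δ - (L/2) * s.card := by
          have : (s.card : ℝ) = s'.card + 1 := by exact_mod_cast hcard
          rw [this]
          have : (a' : ℝ) * δ + b * δ ≤ m * δ := by nlinarith
          nlinarith


set_option maxHeartbeats 1000000 in
theorem measure_negative_part_exp_decay
    (C : ℝ) (hC : 0 ≤ C) :
    ∃ C' : ℝ, ∀ (X : Type) (_ : MeasurableSpace X) (μ : Measure X),
      IsProbabilityMeasure μ →
      ∀ (T T' : X → X), MeasurePreserving T μ μ → MeasurePreserving T' μ μ →
      Function.LeftInverse T' T → Function.RightInverse T' T →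
      ∀ f : X → ℝ, Integrable f μ → (∫ x, f x ∂μ) = 0 →
      (∀ N : ℕ, 1 ≤ N →
        (∫⁻ x, ENNReal.ofReal (Real.exp (∑ i ∈ Finset.range N, f (T^[i] x))) ∂μ)
          ≤ ENNReal.ofReal C) →
      ∀ L : ℝ, 0 ≤ L →
        μ {x | f x ≤ -L} ≤ ENNReal.ofReal (C' * Real.exp (-L / 6)) := by
  refine ⟨8*C + 14, ?_⟩
  intro X mX μ hμ T T' hT hT' hTT' hT'T f hf hf0 hexp L hL
  -- Step A : replace f by a measurable representative g
  obtain ⟨g, hgm, hfg⟩ : ∃ g : X → ℝ, Measurable g ∧ f =ᵐ[μ] g :=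
    ⟨hf.1.aemeasurable.mk f, hf.1.aemeasurable.measurable_mk, hf.1.aemeasurable.ae_eq_mk⟩
  have hTi : ∀ i : ℕ, MeasurePreserving (T^[i]) μ μ := fun i => hT.iterate i
  have hcomp_ae : ∀ i : ℕ, (fun x => f (T^[i] x)) =ᵐ[μ] (fun x => g (T^[i] x)) := fun i =>
    (hTi i).quasiMeasurePreserving.ae_eq_comp hfg
  have hSae : ∀ N : ℕ, (fun x => ∑ i ∈ Finset.range N, f (T^[i] x))
      =ᵐ[μ] (fun x => ∑ i ∈ Finset.range N, g (T^[i] x)) := by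
    intro N
    have hall : ∀ᵐ x ∂μ, ∀ i ∈ Finset.range N, f (T^[i] x) = g (T^[i] x) :=
      (eventually_all_finset (Finset.range N)).2 fun i _ => hcomp_ae i
    filter_upwards [hall] with x hx
    exact Finset.sum_congr rfl fun i hi => hx i hi
  have hgexp : ∀ N : ℕ, 1 ≤ N →
      (∫⁻ x, ENNReal.ofReal (Real.exp (∑ i ∈ Finset.range N, g (T^[i] x))) ∂μ)
        ≤ ENNReal.ofReal C := by
    intro N hN
    have := hexp N hN
    rwa [lintegral_congr_ae ((hSae N).mono fun x hx =>
      congrArg (fun s => ENNReal.ofReal (Real.exp s)) hx)] at this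
  have hgint : Integrable g μ := hf.congr hfg
  have hg0 : (∫ x, g x ∂μ) = 0 := by rw [← integral_congr_ae hfg, hf0]
  have hseteq : μ {x | f x ≤ -L} = μ {x | g x ≤ -L} :=
    measure_congr (hfg.mono fun x hx => by change (f x ≤ -L) = (g x ≤ -L); rw [hx])
  rw [hseteq]
  -- Step B : small L case
  rcases le_or_gt L 1 with hL1 | hL1
  · have h1 : μ {x | g x ≤ -L} ≤ 1 := prob_le_one
    refine h1.trans ?_
    rw [ENNReal.one_le_ofReal]
    nlinarith [Real.add_one_le_exp (-L/6)]
  -- Step C : main case, L > 1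
  · set δ := Real.exp (-(L/3)) with hδdef
    have hδ0 : 0 < δ := Real.exp_pos _
    have hδ1 : δ ≤ 1 := Real.exp_le_one_iff.2 (by linarith)
    set M := ⌈L / (2*δ)⌉₊ with hMdef
    have hM1 : L / (2*δ) ≤ (M:ℝ) := Nat.le_ceil _
    have hM2 : (M:ℝ) < L/(2*δ) + 1 := Nat.ceil_lt_add_one (by positivity)
    set Sb : ℕ → X → ℝ := fun n x => ∑ i ∈ Finset.range n, g (T^[i] x) with hSbdef
    have hSbm : ∀ n, Measurable (Sb n) := fun n =>
      Finset.measurable_sum _ (fun i _ => hgm.comp (hT.measurable.iterate i))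
    have markov : ∀ n : ℕ, 1 ≤ n → ∀ t : ℝ,
        μ {z | t ≤ Sb n z} ≤ ENNReal.ofReal (C * Real.exp (-t)) := fun n hn t =>
      markov_exp μ C (Sb n) (hSbm n) (hgexp n hn) t
    -- bad sets
    set BadF : Set X := ⋃ b ∈ Finset.Icc 1 M, {x | L/2 + b*δ ≤ Sb b (T x)} with hBadFdef
    set BadB : Set X := ⋃ b ∈ Finset.Icc 1 M, {x | L/2 + b*δ ≤ Sb b (T'^[b] x)} with hBadBdef
    have hmeasF : MeasurableSet BadF := by
      refine Finset.measurableSet_biUnion _ fun b _ => ?_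
      exact (measurableSet_le measurable_const ((hSbm b).comp hT.measurable))
    have hmeasB : MeasurableSet BadB := by
      refine Finset.measurableSet_biUnion _ fun b _ => ?_
      exact (measurableSet_le measurable_const ((hSbm b).comp (hT'.measurable.iterate b)))
    -- measure of each bad piece
    have hpreF : ∀ b : ℕ, μ {x | L/2 + b*δ ≤ Sb b (T x)} = μ {z | L/2 + b*δ ≤ Sb b z} := by
      intro b
      have hms : MeasurableSet {z | L/2 + b*δ ≤ Sb b z} :=
        measurableSet_le measurable_const (hSbm b)
      exact hT.measure_preimage hms.nullMeasurableSet
    have hpreB : ∀ b : ℕ, μ {x | L/2 + b*δ ≤ Sb b (T'^[b] x)} = μ {z | L/2 + b*δ ≤ Sb b z} := by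
      intro b
      have hms : MeasurableSet {z | L/2 + b*δ ≤ Sb b z} :=
        measurableSet_le measurable_const (hSbm b)
      exact (hT'.iterate b).measure_preimage hms.nullMeasurableSet
    -- real sum bound
    have hrealsum : ∑ b ∈ Finset.Icc 1 M, C * Real.exp (-(L/2 + b*δ))
        ≤ 2*C*Real.exp (-(L/6)) := by
      have hterm : ∀ b : ℕ, C * Real.exp (-(L/2 + (b:ℝ)*δ))
          = (C * Real.exp (-(L/2))) * (Real.exp (-δ))^b := by
        intro b
        rw [show -(L/2 + (b:ℝ)*δ) = -(L/2) + (b:ℝ)*(-δ) by ring, Real.exp_add,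
          Real.exp_nat_mul]
        ring
      calc ∑ b ∈ Finset.Icc 1 M, C * Real.exp (-(L/2 + b*δ))
          = (C * Real.exp (-(L/2))) * ∑ b ∈ Finset.Icc 1 M, (Real.exp (-δ))^b := by
            rw [Finset.mul_sum]; exact Finset.sum_congr rfl fun b _ => hterm b
        _ ≤ (C * Real.exp (-(L/2))) * (2/δ) := by
            refine mul_le_mul_of_nonneg_left ?_ (by positivity)
            refine le_trans (Finset.sum_le_sum_of_subset_of_nonneg ?_
              (fun b _ _ => pow_nonneg (Real.exp_pos _).le b)) (geom_aux hδ0 hδ1 (M+1))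
            intro b hb
            simp only [Finset.mem_Icc] at hb
            exact Finset.mem_range.2 (by omega)
        _ = 2*C*Real.exp (-(L/6)) := by
            have hd : (2:ℝ)/δ = 2*Real.exp (L/3) := by
              rw [hδdef, Real.exp_neg]; field_simp
            rw [hd, show C * Real.exp (-(L/2)) * (2*Real.exp (L/3))
                = 2*C*(Real.exp (-(L/2)) * Real.exp (L/3)) by ring, ← Real.exp_add,
              show -(L/2)+L/3 = -(L/6) by ring]
    have hbadF : μ BadF ≤ ENNReal.ofReal (2*C*Real.exp (-(L/6))) := by
      calc μ BadF ≤ ∑ b ∈ Finset.Icc 1 M, μ {x | L/2 + b*δ ≤ Sb b (T x)} :=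
            measure_biUnion_finset_le _ _
        _ ≤ ∑ b ∈ Finset.Icc 1 M, ENNReal.ofReal (C * Real.exp (-(L/2 + b*δ))) := by
            refine Finset.sum_le_sum fun b hb => ?_
            rw [hpreF b]
            exact markov b (Finset.mem_Icc.1 hb).1 _
        _ = ENNReal.ofReal (∑ b ∈ Finset.Icc 1 M, C * Real.exp (-(L/2 + b*δ))) :=
            (ENNReal.ofReal_sum_of_nonneg (fun b _ => by positivity)).symm
        _ ≤ ENNReal.ofReal (2*C*Real.exp (-(L/6))) := ENNReal.ofReal_le_ofReal hrealsum
    have hbadB : μ BadB ≤ ENNReal.ofReal (2*C*Real.exp (-(L/6))) := by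
      calc μ BadB ≤ ∑ b ∈ Finset.Icc 1 M, μ {x | L/2 + b*δ ≤ Sb b (T'^[b] x)} :=
            measure_biUnion_finset_le _ _
        _ ≤ ∑ b ∈ Finset.Icc 1 M, ENNReal.ofReal (C * Real.exp (-(L/2 + b*δ))) := by
            refine Finset.sum_le_sum fun b hb => ?_
            rw [hpreB b]
            exact markov b (Finset.mem_Icc.1 hb).1 _
        _ = ENNReal.ofReal (∑ b ∈ Finset.Icc 1 M, C * Real.exp (-(L/2 + b*δ))) :=
            (ENNReal.ofReal_sum_of_nonneg (fun b _ => by positivity)).symm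
        _ ≤ ENNReal.ofReal (2*C*Real.exp (-(L/6))) := ENNReal.ofReal_le_ofReal hrealsum
    -- the good set
    obtain ⟨A', hA'def⟩ : ∃ A'' : Set X, A'' = {x | g x ≤ -L} \ (BadF ∪ BadB) := ⟨_, rfl⟩
    have hA'meas : MeasurableSet A' := by
      rw [hA'def]
      exact (measurableSet_le hgm measurable_const).diff (hmeasF.union hmeasB)
    have hsplitμ : μ {x | g x ≤ -L} ≤ μ A' + (μ BadF + μ BadB) := by
      calc μ {x | g x ≤ -L} ≤ μ (A' ∪ (BadF ∪ BadB)) := by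
            rw [hA'def]
            exact measure_mono (Set.subset_diff_union _ _)
        _ ≤ μ A' + μ (BadF ∪ BadB) := measure_union_le _ _
        _ ≤ μ A' + (μ BadF + μ BadB) := add_le_add_right (measure_union_le _ _) _
    -- hypotheses for visit_bound
    have hAneg : ∀ x ∈ A', g x ≤ -L := fun x hx => by rw [hA'def] at hx; exact hx.1
    have hFgood : ∀ x ∈ A', ∀ b : ℕ, 1 ≤ b → b ≤ M →
        ∑ i ∈ Finset.range b, g (T^[i] (T x)) ≤ L/2 + b*δ := by
      intro x hx b hb1 hbM
      rw [hA'def] at hx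
      by_contra hcon
      push_neg at hcon
      exact hx.2 (Or.inl (Set.mem_biUnion (Finset.mem_Icc.2 ⟨hb1, hbM⟩) hcon.le))
    have hBgood : ∀ x ∈ A', ∀ a : ℕ, 1 ≤ a → a ≤ M →
        ∑ i ∈ Finset.range a, g (T^[i] (T'^[a] x)) ≤ L/2 + a*δ := by
      intro x hx a ha1 haM
      rw [hA'def] at hx
      by_contra hcon
      push_neg at hcon
      exact hx.2 (Or.inr (Set.mem_biUnion (Finset.mem_Icc.2 ⟨ha1, haM⟩) hcon.le))
    -- integrability facts
    have hgcompint : ∀ i : ℕ, Integrable (fun x => g (T^[i] x)) μ := fun i =>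
      ((hTi i).integrable_comp hgint.1).2 hgint
    have hSint : Integrable (Sb (M+1)) μ :=
      integrable_finset_sum _ (fun i _ => hgcompint i)
    have hgcomp0 : ∀ i : ℕ, (∫ x, g (T^[i] x) ∂μ) = 0 := by
      intro i
      have h1 : ∫ y, g y ∂(Measure.map (T^[i]) μ) = ∫ x, g (T^[i] x) ∂μ := by
        refine integral_map (hTi i).measurable.aemeasurable ?_
        rw [(hTi i).map_eq]
        exact hgint.1
      rw [← h1, (hTi i).map_eq, hg0]
    have hSzero : (∫ x, Sb (M+1) x ∂μ) = 0 := by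
      rw [show (fun x => Sb (M+1) x) = fun x => ∑ i ∈ Finset.range (M+1), g (T^[i] x) from rfl,
        integral_finset_sum _ (fun i _ => hgcompint i)]
      simp [hgcomp0]
    -- negative part control
    set nS : X → ℝ := fun x => max (-(Sb (M+1) x)) 0 with hnSdef
    have hnSint : Integrable nS μ := hSint.neg.pos_part
    have hposle : (∫ x, max (Sb (M+1) x) 0 ∂μ) ≤ C := by
      have hpos_eq : (∫ x, max (Sb (M+1) x) 0 ∂μ)
          = (∫⁻ x, ENNReal.ofReal (max (Sb (M+1) x) 0) ∂μ).toReal :=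
        integral_eq_lintegral_of_nonneg_ae (Eventually.of_forall fun x => le_max_right _ _)
          ((hSbm (M+1)).max measurable_const).aestronglyMeasurable
      have hlt : (∫⁻ x, ENNReal.ofReal (max (Sb (M+1) x) 0) ∂μ) ≤ ENNReal.ofReal C := by
        refine le_trans (lintegral_mono fun x => ENNReal.ofReal_le_ofReal ?_)
          (hgexp (M+1) (by omega))
        exact max_le (by linarith [Real.add_one_le_exp (Sb (M+1) x)]) (Real.exp_nonneg _)
      rw [hpos_eq]
      calc (∫⁻ x, ENNReal.ofReal (max (Sb (M+1) x) 0) ∂μ).toReal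
          ≤ (ENNReal.ofReal C).toReal := ENNReal.toReal_mono ENNReal.ofReal_ne_top hlt
        _ = C := ENNReal.toReal_ofReal hC
    have hnS_int_le : (∫ x, nS x ∂μ) ≤ C := by
      have heqfun : nS = fun x => max (Sb (M+1) x) 0 - Sb (M+1) x := by
        funext x
        rcases le_total (Sb (M+1) x) 0 with hc | hc
        · rw [hnSdef]
          simp only []
          rw [max_eq_left (neg_nonneg.2 hc), max_eq_right hc]
          ring
        · rw [hnSdef]
          simp only []
          rw [max_eq_right (neg_nonpos.2 hc), max_eq_left hc]
          ring
      rw [heqfun, integral_sub hSint.pos_part hSint, hSzero, sub_zero]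
      exact hposle
    have hnS_lint : (∫⁻ x, ENNReal.ofReal (nS x) ∂μ) ≤ ENNReal.ofReal C := by
      rw [← ofReal_integral_eq_lintegral_ofReal hnSint
        (Eventually.of_forall fun x => le_max_right _ _)]
      exact ENNReal.ofReal_le_ofReal hnS_int_le
    -- visit counts
    set k : X → ℕ := fun y => ((Finset.range (M+1)).filter (fun a => T^[a] y ∈ A')).card
      with hkdef
    have claim : ∀ y, (k y : ℝ) * (L/2) ≤ nS y + (L/2 + δ*((M:ℝ)+1)) := by
      intro y
      have hnS0 : 0 ≤ nS y := le_max_right _ _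
      rcases Nat.eq_zero_or_pos (k y) with h0 | h1
      · have hky0 : (k y : ℝ) = 0 := by rw [h0]; simp
        rw [hky0]
        nlinarith [mul_pos hδ0 (by positivity : (0:ℝ) < (M:ℝ)+1)]
      · have h1' : 1 ≤ ((Finset.range (M+1)).filter (fun a => T^[a] y ∈ A')).card := h1
        have hvb := visit_bound T T' hTT' g L δ (by linarith) hδ0.le M A'
          hAneg hFgood hBgood (M+1) le_rfl y h1'
        have hmax : -(Sb (M+1) y) ≤ nS y := le_max_left _ _
        have hcast : ((M+1 : ℕ) : ℝ) = (M:ℝ)+1 := by push_cast; ring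
        rw [hcast] at hvb
        have hSle : Sb (M+1) y ≤ L/2 + ((M:ℝ)+1)*δ
            - (L/2) * (((Finset.range (M+1)).filter (fun a => T^[a] y ∈ A')).card : ℝ) := hvb
        have hky : (k y : ℝ)
            = (((Finset.range (M+1)).filter (fun a => T^[a] y ∈ A')).card : ℝ) := rfl
        rw [hky]
        nlinarith [hSle, hmax]
    -- lintegral of visit count
    have hklint : (∫⁻ y, (k y : ℝ≥0∞) ∂μ) = ((M+1 : ℕ) : ℝ≥0∞) * μ A' := by
      have hind : ∀ y, ((k y : ℕ) : ℝ≥0∞)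
          = ∑ a ∈ Finset.range (M+1), A'.indicator (fun _ => (1:ℝ≥0∞)) (T^[a] y) := by
        intro y
        rw [hkdef]
        simp only []
        rw [Finset.card_filter]
        push_cast
        refine Finset.sum_congr rfl fun a _ => ?_
        simp [Set.indicator_apply]
      calc (∫⁻ y, (k y : ℝ≥0∞) ∂μ)
          = ∫⁻ y, ∑ a ∈ Finset.range (M+1), A'.indicator (fun _ => (1:ℝ≥0∞)) (T^[a] y) ∂μ :=
            lintegral_congr fun y => hind y
        _ = ∑ a ∈ Finset.range (M+1),
              ∫⁻ y, A'.indicator (fun _ => (1:ℝ≥0∞)) (T^[a] y) ∂μ :=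
            lintegral_finset_sum _ (fun a _ =>
              ((measurable_const.indicator hA'meas).comp (hT.measurable.iterate a)))
        _ = ∑ a ∈ Finset.range (M+1), μ A' := by
            refine Finset.sum_congr rfl fun a _ => ?_
            rw [(hTi a).lintegral_comp (measurable_const.indicator hA'meas)]
            exact lintegral_indicator_one hA'meas
        _ = ((M+1 : ℕ) : ℝ≥0∞) * μ A' := by
            rw [Finset.sum_const, Finset.card_range, nsmul_eq_mul]
    -- main chain
    have hδM : δ*((M:ℝ)+1) ≤ L/2 + 2 := by
      have h1 : (M:ℝ) + 1 ≤ L/(2*δ) + 2 := by linarith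
      have h2 : δ*((M:ℝ)+1) ≤ δ*(L/(2*δ)+2) := by nlinarith
      have h3 : δ*(L/(2*δ)+2) = L/2 + 2*δ := by field_simp
      nlinarith
    have hmain : ((M+1 : ℕ) : ℝ≥0∞) * μ A' * ENNReal.ofReal (L/2)
        ≤ ENNReal.ofReal (C + L + 2) := by
      calc ((M+1 : ℕ) : ℝ≥0∞) * μ A' * ENNReal.ofReal (L/2)
          = (∫⁻ y, (k y : ℝ≥0∞) ∂μ) * ENNReal.ofReal (L/2) := by rw [hklint]
        _ = ∫⁻ y, (k y : ℝ≥0∞) * ENNReal.ofReal (L/2) ∂μ :=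
            (lintegral_mul_const' _ _ ENNReal.ofReal_ne_top).symm
        _ ≤ ∫⁻ y, (ENNReal.ofReal (nS y) + ENNReal.ofReal (L/2 + δ*((M:ℝ)+1))) ∂μ := by
            refine lintegral_mono fun y => ?_
            have h1 : (k y : ℝ≥0∞) * ENNReal.ofReal (L/2)
                = ENNReal.ofReal ((k y : ℝ) * (L/2)) := by
              rw [ENNReal.ofReal_mul (Nat.cast_nonneg _), ENNReal.ofReal_natCast]
            rw [h1]
            exact le_trans (ENNReal.ofReal_le_ofReal (claim y)) ENNReal.ofReal_add_le
        _ = (∫⁻ y, ENNReal.ofReal (nS y) ∂μ) + ENNReal.ofReal (L/2 + δ*((M:ℝ)+1)) * 1 := by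
            rw [lintegral_add_right _ measurable_const, lintegral_const, measure_univ]
        _ ≤ ENNReal.ofReal C + ENNReal.ofReal (L/2 + δ*((M:ℝ)+1)) := by
            rw [mul_one]
            exact add_le_add_left hnS_lint _
        _ ≤ ENNReal.ofReal (C + L + 2) := by
            rw [← ENNReal.ofReal_add hC (by positivity)]
            refine ENNReal.ofReal_le_ofReal ?_
            linarith
    -- extract the measure of A'
    have hA'le : μ A' ≤ ENNReal.ofReal ((4*C+12) * δ) := by
      have hE : ENNReal.ofReal (L*L/(4*δ)) ≤ ((M+1 : ℕ) : ℝ≥0∞) * ENNReal.ofReal (L/2) := by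
        have h1 : ENNReal.ofReal (L/(2*δ)) ≤ ((M+1 : ℕ) : ℝ≥0∞) := by
          rw [← ENNReal.ofReal_natCast (M+1)]
          refine ENNReal.ofReal_le_ofReal ?_
          push_cast
          linarith
        calc ENNReal.ofReal (L*L/(4*δ))
            = ENNReal.ofReal (L/(2*δ)) * ENNReal.ofReal (L/2) := by
              rw [← ENNReal.ofReal_mul (by positivity)]
              congr 1
              field_simp
              ring
          _ ≤ ((M+1 : ℕ) : ℝ≥0∞) * ENNReal.ofReal (L/2) := mul_le_mul_left h1 _
      have hmul : μ A' * ENNReal.ofReal (L*L/(4*δ)) ≤ ENNReal.ofReal (C+L+2) := by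
        refine le_trans (mul_le_mul_right hE _) ?_
        calc μ A' * (((M+1 : ℕ) : ℝ≥0∞) * ENNReal.ofReal (L/2))
            = ((M+1 : ℕ) : ℝ≥0∞) * μ A' * ENNReal.ofReal (L/2) := by ring
          _ ≤ ENNReal.ofReal (C + L + 2) := hmain
      have hpos : (0:ℝ) < L*L/(4*δ) := by positivity
      have hdiv := (ENNReal.le_div_iff_mul_le
        (Or.inl (by simp only [ne_eq, ENNReal.ofReal_eq_zero, not_le]; exact hpos))
        (Or.inl ENNReal.ofReal_ne_top)).2 hmul
      refine le_trans hdiv ?_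
      rw [← ENNReal.ofReal_div_of_pos hpos]
      refine ENNReal.ofReal_le_ofReal ?_
      have hLL : (1:ℝ) ≤ L*L := by nlinarith
      rw [div_div_eq_mul_div, div_le_iff₀ (by linarith : (0:ℝ) < L*L)]
      have hin : (C+L+2)*4 ≤ (4*C+12)*(L*L) := by
        nlinarith [mul_nonneg hC (by linarith : (0:ℝ) ≤ L*L - 1),
          mul_nonneg (by linarith : (0:ℝ) ≤ L-1) (by linarith : (0:ℝ) ≤ 3*L+2)]
      calc (C+L+2)*(4*δ) = ((C+L+2)*4)*δ := by ring
        _ ≤ ((4*C+12)*(L*L))*δ := mul_le_mul_of_nonneg_right hin hδ0.le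
        _ = (4*C+12)*δ*(L*L) := by ring
    -- final assembly
    calc μ {x | g x ≤ -L} ≤ μ A' + (μ BadF + μ BadB) := hsplitμ
      _ ≤ ENNReal.ofReal ((4*C+12)*δ)
          + (ENNReal.ofReal (2*C*Real.exp (-(L/6))) + ENNReal.ofReal (2*C*Real.exp (-(L/6)))) :=
          add_le_add hA'le (add_le_add hbadF hbadB)
      _ = ENNReal.ofReal ((4*C+12)*δ + (2*C*Real.exp (-(L/6)) + 2*C*Real.exp (-(L/6)))) := by
          rw [ENNReal.ofReal_add (by positivity) (by positivity),
            ENNReal.ofReal_add (by positivity) (by positivity)]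
      _ ≤ ENNReal.ofReal ((8*C + 14) * Real.exp (-L/6)) := by
          refine ENNReal.ofReal_le_ofReal ?_
          have h1 : δ ≤ Real.exp (-L/6) := by
            rw [hδdef]
            exact Real.exp_le_exp.2 (by linarith)
          have h2 : Real.exp (-(L/6)) = Real.exp (-L/6) := by rw [neg_div]
          nlinarith [Real.exp_pos (-L/6)]
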